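/- Let p be prime, n ≥ 1, 1 ≤ e ≤ n, and z any integer. If Φ_j (for n-e+1 ≤ j ≤ n) are integers coprime to p, then Σ_{k=0}^{p^n - 1} ⟨(z - Σ_{j=n-e+1}^n a_j^{(k)} Φ_j p^{n-j})/p^e⟩ = (p^n - p^{n-e})/2, where a_j^{(k)} are the p-adic digits of k and ⟨·⟩ is the fractional part. -/

import Mathlib

private theorem digit_mod (p q t e : ℕ) (hp : 0 < p) (ht : t < e) :
    (q / p ^ t) % p = ((q % p ^ e) / p ^ t) % p := by
  conv_lhs => rw [← Nat.div_add_mod q (p ^ e)]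
  have h1 : p ^ e = p ^ t * p ^ (e - t) := by rw [← pow_add]; congr 1; omega
  have h2 : p ^ (e - t) = p * p ^ (e - t - 1) := by rw [← pow_succ']; congr 1; omega
  rw [h1, mul_assoc, Nat.mul_add_div (pow_pos hp t)]
  rw [h2, mul_assoc, Nat.mul_add_mod]

private def Tsum (p e : ℕ) (c : ℕ → ℤ) (q : ℕ) : ℤ :=
  ∑ i ∈ Finset.range e, (((q / p ^ (e - 1 - i)) % p : ℕ) : ℤ) * c i * (p : ℤ) ^ i

private theorem Tsum_succ (p : ℕ) (hp : 0 < p) (e : ℕ) (c : ℕ → ℤ) (q : ℕ) (hq : q < p ^ (e + 1)) :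
    Tsum p (e + 1) c q =
      ((q / p ^ e : ℕ) : ℤ) * c 0 + p * Tsum p e (fun i => c (i + 1)) (q % p ^ e) := by
  unfold Tsum
  rw [Finset.sum_range_succ']
  have hd : (q / p ^ e) % p = q / p ^ e := by
    apply Nat.mod_eq_of_lt
    rw [Nat.div_lt_iff_lt_mul (pow_pos hp e), ← pow_succ']
    exact hq
  rw [Finset.mul_sum, add_comm (((q / p ^ e : ℕ) : ℤ) * c 0)]
  congr 1
  · apply Finset.sum_congr rfl
    intro i hi
    rw [Finset.mem_range] at hi
    have h1 : e + 1 - 1 - (i + 1) = e - 1 - i := by omega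
    rw [h1, ← digit_mod p q (e - 1 - i) e hp (by omega)]
    push_cast
    ring
  · simp [hd]

private theorem Tsum_inj (p : ℕ) (hp : p.Prime) :
    ∀ e (c : ℕ → ℤ), (∀ i, i < e → IsCoprime (c i) (p : ℤ)) →
    ∀ q q', q < p ^ e → q' < p ^ e →
    ((p : ℤ) ^ e ∣ Tsum p e c q - Tsum p e c q') → q = q' := by
  intro e
  induction e with
  | zero => intro c _ q q' hq hq' _; simp at hq hq'; omega
  | succ e ih =>
    intro c hc q q' hq hq' hdvd
    have hp0 : 0 < p := hp.pos
    rw [Tsum_succ p hp0 e c q hq, Tsum_succ p hp0 e c q' hq'] at hdvd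
    set d := q / p ^ e with hdq
    set d' := q' / p ^ e with hdq'
    set r := q % p ^ e with hrq
    set r' := q' % p ^ e with hrq'
    have hdp : d < p := by
      rw [hdq, Nat.div_lt_iff_lt_mul (pow_pos hp0 e), ← pow_succ']
      exact hq
    have hdp' : d' < p := by
      rw [hdq', Nat.div_lt_iff_lt_mul (pow_pos hp0 e), ← pow_succ']
      exact hq'
    have hr : r < p ^ e := Nat.mod_lt _ (pow_pos hp0 e)
    have hr' : r' < p ^ e := Nat.mod_lt _ (pow_pos hp0 e)
    have e1 : q = p ^ e * d + r := (Nat.div_add_mod q (p ^ e)).symm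
    have e2 : q' = p ^ e * d' + r' := (Nat.div_add_mod q' (p ^ e)).symm
    clear_value d d' r r'
    set T := Tsum p e (fun i => c (i + 1))
    have hdvd2 : ((d : ℤ) * c 0 + p * T r) - ((d' : ℤ) * c 0 + p * T r') =
        ((d : ℤ) - d') * c 0 + p * (T r - T r') := by ring
    rw [hdvd2] at hdvd
    have hpd : (p : ℤ) ∣ ((d : ℤ) - d') * c 0 := by
      have h1 : (p : ℤ) ∣ (p : ℤ) ^ (e + 1) := dvd_pow_self _ (by omega)
      have h2 : (p : ℤ) ∣ ((d : ℤ) - d') * c 0 + p * (T r - T r') := h1.trans hdvd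
      have h3 : (p : ℤ) ∣ p * (T r - T r') := Dvd.intro _ rfl
      simpa using dvd_sub h2 h3
    have hdd : d = d' := by
      have h4 : (p : ℤ) ∣ ((d : ℤ) - d') :=
        ((hc 0 (by omega)).symm).dvd_of_dvd_mul_right hpd
      have hb1 : (d : ℤ) < p := by exact_mod_cast hdp
      have hb2 : (d' : ℤ) < p := by exact_mod_cast hdp'
      have h5 : ((d : ℤ) - d') = 0 := by
        apply Int.eq_zero_of_abs_lt_dvd h4
        rw [abs_lt]
        constructor <;> omega
      omega
    have hrr : r = r' := by
      apply ih (fun i => c (i + 1)) (fun i hi => hc (i + 1) (by omega)) r r' hr hr'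
      have h6 : ((d : ℤ) - d') * c 0 + p * (T r - T r') = p * (T r - T r') := by
        rw [hdd]; ring
      rw [h6, pow_succ'] at hdvd
      exact (mul_dvd_mul_iff_left (by exact_mod_cast hp.ne_zero : (p:ℤ) ≠ 0)).mp hdvd
    rw [e1, e2, hdd, hrr]

private lemma sum_div_const (A B : ℕ) (hB : 0 < B) (f : ℕ → ℚ) :
    ∑ k ∈ Finset.range (A * B), f (k / B) = ∑ q ∈ Finset.range A, (B : ℚ) * f q := by
  have h : ∑ k ∈ Finset.range (A * B), f (k / B)
      = ∑ x ∈ Finset.range A ×ˢ Finset.range B, f x.1 := by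
    apply Finset.sum_nbij' (i := fun k => (k / B, k % B)) (j := fun x => x.1 * B + x.2)
    · intro k hk
      rw [Finset.mem_range] at hk
      rw [Finset.mem_product, Finset.mem_range, Finset.mem_range]
      exact ⟨(Nat.div_lt_iff_lt_mul hB).mpr hk, Nat.mod_lt _ hB⟩
    · intro x hx
      rw [Finset.mem_product, Finset.mem_range, Finset.mem_range] at hx
      rw [Finset.mem_range]
      have h1 : (x.1 + 1) * B ≤ A * B := Nat.mul_le_mul_right _ (by omega)
      have h2 : (x.1 + 1) * B = x.1 * B + B := by ring
      omega
    · intro k _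
      simp only []
      rw [mul_comm]
      exact Nat.div_add_mod k B
    · intro x hx
      rw [Finset.mem_product, Finset.mem_range, Finset.mem_range] at hx
      have hd : (x.1 * B + x.2) / B = x.1 := by
        rw [mul_comm, Nat.mul_add_div hB, Nat.div_eq_of_lt hx.2, add_zero]
      have hm : (x.1 * B + x.2) % B = x.2 := by
        rw [mul_comm, Nat.mul_add_mod, Nat.mod_eq_of_lt hx.2]
      rw [hd, hm]
    · intro k _; rfl
  rw [h, Finset.sum_product]
  apply Finset.sum_congr rfl
  intro q _
  simp [Finset.sum_const, Finset.card_range, nsmul_eq_mul]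


/-- For `p` prime, `1 ≤ e ≤ n`, any integer `z`, and `Φ_j` coprime to `p` for
`n-e+1 ≤ j ≤ n`:
`Σ_{k=0}^{p^n-1} ⟨(z - Σ_{j=n-e+1}^n a_j^(k) Φ_j p^(n-j))/p^e⟩ = (p^n - p^(n-e))/2`,
where `a_j^(k)` are the `p`-adic digits of `k` and `⟨·⟩` is the fractional part. -/
theorem sum_fract_digits
    (p n e : ℕ) (hp : p.Prime) (hn : 1 ≤ n) (he : 1 ≤ e) (hen : e ≤ n) (z : ℤ)
    (Φ : ℕ → ℤ)
    (hΦcop : ∀ j, n - e < j → j ≤ n → IsCoprime (Φ j) (p : ℤ)) :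
    ∑ k ∈ Finset.range (p ^ n),
        Int.fract (((z - ∑ j ∈ Finset.Ioc (n - e) n,
            (((k / p ^ (j - 1)) % p : ℕ) : ℤ) * Φ j * (p : ℤ) ^ (n - j) : ℤ) : ℚ)
          / (p : ℚ) ^ e)
      = ((p : ℚ) ^ n - (p : ℚ) ^ (n - e)) / 2 := by
  have hp0 : 0 < p := hp.pos
  have hA : 0 < p ^ e := pow_pos hp0 e
  have hB : 0 < p ^ (n - e) := pow_pos hp0 (n - e)
  haveI : NeZero (p ^ e) := ⟨hA.ne'⟩
  set c : ℕ → ℤ := fun i => Φ (n - i) with hc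
  have hcop : ∀ i, i < e → IsCoprime (c i) (p : ℤ) := by
    intro i hi
    exact hΦcop (n - i) (by omega) (by omega)
  -- Step 1: rewrite inner sum as Tsum applied to high digits
  have hS : ∀ k : ℕ, (∑ j ∈ Finset.Ioc (n - e) n,
      (((k / p ^ (j - 1)) % p : ℕ) : ℤ) * Φ j * (p : ℤ) ^ (n - j))
      = Tsum p e c (k / p ^ (n - e)) := by
    intro k
    unfold Tsum
    apply Finset.sum_nbij' (i := fun j => n - j) (j := fun i => n - i)
    · intro j hj; rw [Finset.mem_Ioc] at hj; rw [Finset.mem_range]; omega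
    · intro i hi; rw [Finset.mem_range] at hi; rw [Finset.mem_Ioc]; omega
    · intro j hj; rw [Finset.mem_Ioc] at hj; omega
    · intro i hi; rw [Finset.mem_range] at hi; omega
    · intro j hj
      rw [Finset.mem_Ioc] at hj
      have hdiv : k / p ^ (n - e) / p ^ (e - 1 - (n - j)) = k / p ^ (j - 1) := by
        rw [Nat.div_div_eq_div_mul, ← pow_add]
        congr 2
        omega
      have hj2 : n - (n - j) = j := by omega
      simp only [hc, hdiv, hj2]
  -- Step 2: rewrite the sum using sum_div_const
  have hpow : p ^ n = p ^ e * p ^ (n - e) := by rw [← pow_add]; congr 1; omega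
  have hcast : (p : ℚ) ^ e = ((p ^ e : ℕ) : ℚ) := by push_cast; ring
  calc ∑ k ∈ Finset.range (p ^ n),
        Int.fract (((z - ∑ j ∈ Finset.Ioc (n - e) n,
            (((k / p ^ (j - 1)) % p : ℕ) : ℤ) * Φ j * (p : ℤ) ^ (n - j) : ℤ) : ℚ)
          / (p : ℚ) ^ e)
      = ∑ k ∈ Finset.range (p ^ e * p ^ (n - e)),
          (fun q => Int.fract (((z - Tsum p e c q : ℤ) : ℚ) / ((p ^ e : ℕ) : ℚ)))
            (k / p ^ (n - e)) := by
        rw [← hpow]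
        apply Finset.sum_congr rfl
        intro k _
        rw [hS k, hcast]
    _ = ∑ q ∈ Finset.range (p ^ e),
          ((p ^ (n - e) : ℕ) : ℚ) *
            Int.fract (((z - Tsum p e c q : ℤ) : ℚ) / ((p ^ e : ℕ) : ℚ)) := by
        exact sum_div_const (p ^ e) (p ^ (n - e)) hB
          (fun q => Int.fract (((z - Tsum p e c q : ℤ) : ℚ) / ((p ^ e : ℕ) : ℚ)))
    _ = ∑ q ∈ Finset.range (p ^ e),
          ((p ^ (n - e) : ℕ) : ℚ) *
            ((((z - Tsum p e c q : ℤ) : ZMod (p ^ e)).val : ℚ) / ((p ^ e : ℕ) : ℚ)) := by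
        apply Finset.sum_congr rfl
        intro q _
        rw [Int.fract_div_intCast_eq_div_intCast_mod]
        congr 1
        have := ZMod.val_intCast (n := p ^ e) (z - Tsum p e c q)
        rw [← this]
        push_cast
        ring
    _ = ((p ^ (n - e) : ℕ) : ℚ) / ((p ^ e : ℕ) : ℚ) *
          ∑ q ∈ Finset.range (p ^ e),
            (((z - Tsum p e c q : ℤ) : ZMod (p ^ e)).val : ℚ) := by
        rw [Finset.mul_sum]
        apply Finset.sum_congr rfl
        intro q _
        ring
    _ = ((p ^ (n - e) : ℕ) : ℚ) / ((p ^ e : ℕ) : ℚ) *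
          ∑ i ∈ Finset.range (p ^ e), (i : ℚ) := by
        congr 1
        set F : (q : ℕ) → q ∈ Finset.range (p ^ e) → ℕ :=
          fun q _ => ((z - Tsum p e c q : ℤ) : ZMod (p ^ e)).val with hF
        have hmem : ∀ (q : ℕ) (hq : q ∈ Finset.range (p ^ e)),
            F q hq ∈ Finset.range (p ^ e) := by
          intro q _
          rw [Finset.mem_range]
          exact ZMod.val_lt _
        have hinj : ∀ (q : ℕ) (hq : q ∈ Finset.range (p ^ e)) (q' : ℕ)
            (hq' : q' ∈ Finset.range (p ^ e)), F q hq = F q' hq' → q = q' := by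
          intro q hq q' hq' hval
          rw [Finset.mem_range] at hq hq'
          have heq : ((z - Tsum p e c q : ℤ) : ZMod (p ^ e))
              = ((z - Tsum p e c q' : ℤ) : ZMod (p ^ e)) := ZMod.val_injective _ hval
          rw [ZMod.intCast_eq_intCast_iff] at heq
          have hdvd := heq.dvd
          have hdvd2 : (p : ℤ) ^ e ∣ Tsum p e c q - Tsum p e c q' := by
            have hpe : ((p ^ e : ℕ) : ℤ) = (p : ℤ) ^ e := by push_cast; ring
            rw [hpe] at hdvd
            have h3 : z - Tsum p e c q' - (z - Tsum p e c q)
                = Tsum p e c q - Tsum p e c q' := by ring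
            rwa [h3] at hdvd
          exact Tsum_inj p hp e c hcop q q' hq hq' hdvd2
        have hsurj : ∀ b ∈ Finset.range (p ^ e), ∃ a, ∃ (ha : a ∈ Finset.range (p ^ e)),
            F a ha = b := by
          intro b hb
          obtain ⟨a, ha, hab⟩ := Finset.surj_on_of_inj_on_of_card_le F hmem
            (fun a₁ a₂ ha₁ ha₂ h => hinj a₁ ha₁ a₂ ha₂ h) le_rfl b hb
          exact ⟨a, ha, hab.symm⟩
        exact Finset.sum_bij F hmem hinj hsurj (fun q hq => rfl)
    _ = ((p : ℚ) ^ n - (p : ℚ) ^ (n - e)) / 2 := by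
        have h1 := Finset.sum_range_id_mul_two (p ^ e)
        have h2 : (((∑ i ∈ Finset.range (p ^ e), i) * 2 : ℕ) : ℚ)
            = ((p ^ e * (p ^ e - 1) : ℕ) : ℚ) := Nat.cast_inj.mpr h1
        push_cast [Nat.cast_sub (by omega : 1 ≤ p ^ e)] at h2
        have hsum : (∑ i ∈ Finset.range (p ^ e), (i : ℚ)) * 2
            = (p : ℚ) ^ e * ((p : ℚ) ^ e - 1) := by linarith
        have hA0' : (p : ℚ) ^ e ≠ 0 := by positivity
        have hBA' : (p : ℚ) ^ (n - e) * (p : ℚ) ^ e = (p : ℚ) ^ n := by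
          rw [← pow_add]; congr 1; omega
        have hcastB : ((p ^ (n - e) : ℕ) : ℚ) = (p : ℚ) ^ (n - e) := by push_cast; ring
        rw [hcastB, ← hcast, div_mul_eq_mul_div, div_eq_div_iff hA0' two_ne_zero]
        linear_combination ((p : ℚ) ^ (n - e)) * hsum + ((p : ℚ) ^ e) * hBA'
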